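/- Let η ≥ 0 be a nonnegative vector, let k ≠ k*(μ) and suppose k ∈ N(μ) or |M(μ)| < m. Assume that for each arm j the divergence map λ_j ↦ d_j(μ_j, λ_j) is continuous, equals 0 at λ_j = μ_j, is strictly decreasing on (−∞, μ_j] and strictly increasing on [μ_j, ∞). Then inf over λ ∈ B_k(m,μ) of η^⊤ d(μ,λ) equals η_k · d_k(μ_k, μ*), where d(μ,λ) = (d_j(μ_j,λ_j))_j. -/

import Mathlib

def IsMode {K : ℕ} (G : SimpleGraph (Fin K)) (lam : Fin K → ℝ) (k : Fin K) : Prop :=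
  ∀ l, G.Adj k l → lam l < lam k

def AtMostModal {K : ℕ} (G : SimpleGraph (Fin K)) (m : ℕ) : Set (Fin K → ℝ) :=
  {lam | {k | IsMode G lam k}.ncard ≤ m}

/-- `N(μ)`: the set of modes of `μ` together with their neighbors. -/
def ModeNeighborhood {K : ℕ} (G : SimpleGraph (Fin K)) (mu : Fin K → ℝ) : Set (Fin K) :=
  {j | IsMode G mu j ∨ ∃ i, IsMode G mu i ∧ G.Adj i j}

/-- `B_k(m,μ)`: confusing parameters whose unique argmax is `k`. -/
def ConfusingSetAt {K : ℕ} (G : SimpleGraph (Fin K)) (m : ℕ) (mu : Fin K → ℝ)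
    (kstar k : Fin K) : Set (Fin K → ℝ) :=
  {lam | lam ∈ AtMostModal G m ∧ lam kstar = mu kstar ∧ ∀ i, i ≠ k → lam i < lam k}

/-- If `k ∈ N(μ)` or `μ` has fewer than `m` modes, then
`inf_{λ ∈ B_k(m,μ)} η^⊤ d(μ,λ) = η_k d_k(μ_k, μ*)`. -/
theorem inf_confusingSetAt_trivial_case {K m : ℕ} (G : SimpleGraph (Fin K))
    (mu : Fin K → ℝ) (kstar : Fin K)
    (hmu : mu ∈ AtMostModal G m)
    (hkstar : ∀ j, j ≠ kstar → mu j < mu kstar)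
    (k : Fin K) (hk : k ≠ kstar)
    (hcase : k ∈ ModeNeighborhood G mu ∨ {j | IsMode G mu j}.ncard < m)
    (η : Fin K → ℝ) (hη : ∀ j, 0 ≤ η j)
    (d : Fin K → ℝ → ℝ → ℝ)
    (hd0 : ∀ j x y, 0 ≤ d j x y)
    (hdcont : ∀ j, Continuous (d j (mu j)))
    (hdzero : ∀ j (x : ℝ), d j x x = 0)
    (hdanti : ∀ j (x : ℝ), StrictAntiOn (d j x) (Set.Iic x))
    (hdmono : ∀ j (x : ℝ), StrictMonoOn (d j x) (Set.Ici x)) :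
    sInf ((fun lam => ∑ j, η j * d j (mu j) (lam j)) '' ConfusingSetAt G m mu kstar k)
      = η k * d k (mu k) (mu kstar) := by
  classical
  have hmum : {j | IsMode G mu j}.ncard ≤ m := hmu
  have hmuk : ∀ j, mu j ≤ mu kstar := by
    intro j
    rcases eq_or_ne j kstar with h | h
    · simp [h]
    · exact (hkstar j h).le
  set F : (Fin K → ℝ) → ℝ := fun lam => ∑ j, η j * d j (mu j) (lam j) with hF
  set B := ConfusingSetAt G m mu kstar k with hB
  -- membership of perturbed parameter
  have hmem : ∀ δ : ℝ, 0 < δ → Function.update mu k (mu kstar + δ) ∈ B := by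
    intro δ hδ
    set lam := Function.update mu k (mu kstar + δ) with hlamdef
    have hlamk : lam k = mu kstar + δ := Function.update_self _ _ _
    have hlamne : ∀ j, j ≠ k → lam j = mu j := fun j hj => Function.update_of_ne hj _ _
    refine ⟨?_, hlamne kstar (Ne.symm hk), ?_⟩
    · -- AtMostModal
      have hsub : {j | IsMode G lam j} ⊆ insert k {j | IsMode G mu j ∧ ¬ G.Adj k j} := by
        intro j hj
        rcases eq_or_ne j k with h | h
        · exact Set.mem_insert_iff.mpr (Or.inl h)
        · refine Set.mem_insert_iff.mpr (Or.inr ⟨?_, ?_⟩)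
          · intro l hl
            have hlk : l ≠ k := by
              intro he
              have h1 := hj l hl
              rw [he, hlamk, hlamne j h] at h1
              have := hmuk j
              linarith
            have h1 := hj l hl
            rwa [hlamne l hlk, hlamne j h] at h1
          · intro hadj
            have h1 := hj k (G.adj_symm hadj)
            rw [hlamk, hlamne j h] at h1
            have := hmuk j
            linarith
      have hfin : ∀ s : Set (Fin K), s.Finite := fun s => Set.toFinite s
      have hSsub : {j | IsMode G mu j ∧ ¬ G.Adj k j} ⊆ {j | IsMode G mu j} :=
        fun j hj => hj.1
      have hcard : {j | IsMode G lam j}.ncard ≤ m := by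
        rcases hcase with hN | hlt
        · rcases hN with hmode | ⟨i, hi, hadj⟩
          · -- k is a mode of mu
            have hsub2 : insert k {j | IsMode G mu j ∧ ¬ G.Adj k j} ⊆ {j | IsMode G mu j} := by
              intro j hj
              rcases Set.mem_insert_iff.mp hj with h | h
              · subst h; exact hmode
              · exact h.1
            exact le_trans (Set.ncard_le_ncard (hsub.trans hsub2) (hfin _)) hmu
          · -- k is adjacent to mode i
            have hik : i ≠ k := fun h => (G.irrefl (h ▸ hadj)).elim
            have hsub2 : {j | IsMode G mu j ∧ ¬ G.Adj k j} ⊆ {j | IsMode G mu j} \ {i} := by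
              intro j hj
              refine ⟨hj.1, ?_⟩
              intro h
              rw [Set.mem_singleton_iff] at h
              subst h
              exact hj.2 (G.adj_symm hadj)
            have h1 : {j | IsMode G lam j}.ncard ≤ ({j | IsMode G mu j} \ {i}).ncard + 1 :=
              le_trans (Set.ncard_le_ncard hsub (hfin _))
                (le_trans (Set.ncard_insert_le _ _)
                  (by exact Nat.add_le_add_right (Set.ncard_le_ncard hsub2 (hfin _)) 1))
            have h2 : ({j | IsMode G mu j} \ {i}).ncard = {j | IsMode G mu j}.ncard - 1 :=
              Set.ncard_diff_singleton_of_mem (show i ∈ {j | IsMode G mu j} from hi)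
            have h3 : 0 < {j | IsMode G mu j}.ncard :=
              (Set.ncard_pos (hfin _)).mpr ⟨i, hi⟩
            omega
        · -- fewer than m modes
          have h1 : {j | IsMode G lam j}.ncard ≤ {j | IsMode G mu j}.ncard + 1 :=
            le_trans (Set.ncard_le_ncard hsub (hfin _))
              (le_trans (Set.ncard_insert_le _ _)
                (Nat.add_le_add_right (Set.ncard_le_ncard hSsub (hfin _)) 1))
          omega
      exact hcard
    · intro i hi
      rw [hlamne i hi, hlamk]
      have := hmuk i
      linarith
  -- cost of perturbed parameter
  have hcost : ∀ δ : ℝ, F (Function.update mu k (mu kstar + δ)) =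
      η k * d k (mu k) (mu kstar + δ) := by
    intro δ
    rw [hF]
    simp only
    rw [Finset.sum_eq_single k]
    · rw [Function.update_self]
    · intro j _ hj
      rw [Function.update_of_ne hj, hdzero, mul_zero]
    · intro h
      exact absurd (Finset.mem_univ k) h
  have hbdd : BddBelow (F '' B) := by
    refine ⟨0, ?_⟩
    rintro x ⟨lam, _, rfl⟩
    exact Finset.sum_nonneg fun j _ => mul_nonneg (hη j) (hd0 j _ _)
  have hmukk : mu k < mu kstar := hkstar k hk
  apply le_antisymm
  · -- sInf ≤ RHS, via limit δ → 0⁺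
    have key : ∀ δ ∈ Set.Ioi (0:ℝ),
        sInf (F '' B) ≤ η k * d k (mu k) (mu kstar + δ) := by
      intro δ hδ
      have := csInf_le hbdd ⟨_, hmem δ hδ, hcost δ⟩
      exact this
    have hten : Filter.Tendsto (fun δ : ℝ => η k * d k (mu k) (mu kstar + δ))
        (nhdsWithin 0 (Set.Ioi 0)) (nhds (η k * d k (mu k) (mu kstar))) := by
      have hc : ContinuousAt (fun δ : ℝ => η k * d k (mu k) (mu kstar + δ)) 0 := by
        apply ContinuousAt.mul continuousAt_const
        have := (hdcont k).continuousAt (x := mu kstar + 0)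
        exact this.comp (by continuity : Continuous fun δ : ℝ => mu kstar + δ).continuousAt
      have h := hc.tendsto.mono_left (nhdsWithin_le_nhds (s := Set.Ioi (0:ℝ)))
      simpa using h
    exact ge_of_tendsto hten (Filter.eventually_iff_exists_mem.mpr
      ⟨Set.Ioi 0, self_mem_nhdsWithin, key⟩)
  · -- RHS ≤ sInf
    refine le_csInf ⟨_, Set.mem_image_of_mem F (hmem 1 one_pos)⟩ ?_
    rintro x ⟨lam, hlam, rfl⟩
    obtain ⟨_, hks, hmax⟩ := hlam
    have hlk : mu kstar < lam k := hks ▸ hmax kstar (Ne.symm hk)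
    have hdle : d k (mu k) (mu kstar) ≤ d k (mu k) (lam k) :=
      ((hdmono k (mu k)).monotoneOn) (Set.mem_Ici.mpr hmukk.le)
        (Set.mem_Ici.mpr (le_trans hmukk.le hlk.le)) hlk.le
    calc η k * d k (mu k) (mu kstar) ≤ η k * d k (mu k) (lam k) :=
          mul_le_mul_of_nonneg_left hdle (hη k)
      _ ≤ F lam := Finset.single_le_sum
          (fun j _ => mul_nonneg (hη j) (hd0 j _ _)) (Finset.mem_univ k)
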